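/- For x, y, z ∈ ℝ² distinct, the cyclic sum S = Σ_cyc (x-y)·(x-z) / (|x-y|² |x-z|²) equals 2 sin²(φ)/|y-z|², where φ is the angle at x between x-y and x-z; equivalently S = (1/2) ℛ(x,y,z)^{-2} where ℛ is the circumradius, and hence |S| ≤ (9/2) ρ(x,y,z)^{-2} with ρ² = |x-y|² + |y-z|² + |z-x|². -/

import Mathlib

open RealInnerProductSpace
noncomputable section

abbrev E2 := EuclideanSpace ℝ (Fin 2)

/-- Gram determinant of three vectors in the plane vanishes. -/
lemma gram_det_zero (u v w : E2) :
    ⟪u,u⟫ * ⟪v,v⟫ * ⟪w,w⟫ + 2 * (⟪u,v⟫ * ⟪u,w⟫ * ⟪v,w⟫)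
      - ⟪u,u⟫ * ⟪v,w⟫ ^ 2 - ⟪v,v⟫ * ⟪u,w⟫ ^ 2 - ⟪w,w⟫ * ⟪u,v⟫ ^ 2 = 0 := by
  simp only [PiLp.inner_apply, RCLike.inner_apply, conj_trivial, Fin.sum_univ_two]
  ring

lemma real_aux (A B P : ℝ) (hA : A ≠ 0) (hB : B ≠ 0) (hC : A - 2 * P + B ≠ 0) :
    P / (A * B) + (A - P) / ((A - 2 * P + B) * A) + (B - P) / (B * (A - 2 * P + B))
      = 2 * (A * B - P ^ 2) / (A * B * (A - 2 * P + B)) := by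
  generalize hCdef : A - 2 * P + B = C at hC ⊢
  field_simp
  subst hCdef
  ring

lemma real_aux2 (na nb C P : ℝ) (hna : na ≠ 0) (hnb : nb ≠ 0) (hC : C ≠ 0) :
    2 * (na ^ 2 * nb ^ 2 - P ^ 2) / (na ^ 2 * nb ^ 2 * C)
      = 2 * (1 - (P / (na * nb)) ^ 2) / C := by
  field_simp

/-- Algebraic form of the cyclic sum. -/
lemma cyclic_sum_aux (a b : E2) (ha : a ≠ 0) (hb : b ≠ 0) (hc : b - a ≠ 0) :
    ⟪a, b⟫ / (‖a‖ ^ 2 * ‖b‖ ^ 2) + ⟪b - a, -a⟫ / (‖b - a‖ ^ 2 * ‖-a‖ ^ 2)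
      + ⟪-b, a - b⟫ / (‖-b‖ ^ 2 * ‖a - b‖ ^ 2)
    = 2 * (‖a‖ ^ 2 * ‖b‖ ^ 2 - ⟪a, b⟫ ^ 2) / (‖a‖ ^ 2 * ‖b‖ ^ 2 * ‖b - a‖ ^ 2) := by
  have h1 : ⟪b - a, -a⟫ = ‖a‖ ^ 2 - ⟪a, b⟫ := by
    rw [← real_inner_self_eq_norm_sq]
    simp only [inner_neg_right, inner_sub_left]
    rw [real_inner_comm b a]; ring
  have h2 : ⟪-b, a - b⟫ = ‖b‖ ^ 2 - ⟪a, b⟫ := by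
    rw [← real_inner_self_eq_norm_sq]
    simp only [inner_neg_left, inner_sub_right]
    rw [real_inner_comm b a]; ring
  have hCexp : ‖b - a‖ ^ 2 = ‖a‖ ^ 2 - 2 * ⟪a, b⟫ + ‖b‖ ^ 2 := by
    rw [← real_inner_self_eq_norm_sq, ← real_inner_self_eq_norm_sq,
      ← real_inner_self_eq_norm_sq]
    simp only [inner_sub_left, inner_sub_right]
    rw [real_inner_comm b a]; ring
  have h5 : ‖a - b‖ = ‖b - a‖ := norm_sub_rev a b
  have hA0 : ‖a‖ ≠ 0 := norm_ne_zero_iff.2 ha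
  have hB0 : ‖b‖ ≠ 0 := norm_ne_zero_iff.2 hb
  have hC0 : ‖b - a‖ ≠ 0 := norm_ne_zero_iff.2 hc
  have hC0' : ‖a‖ ^ 2 - 2 * ⟪a, b⟫ + ‖b‖ ^ 2 ≠ 0 := by rw [← hCexp]; positivity
  rw [h1, h2, h5, norm_neg, norm_neg, hCexp]
  exact real_aux _ _ _ (pow_ne_zero 2 hA0) (pow_ne_zero 2 hB0) hC0'

theorem cyclic_sum_circumradius (x y z : E2)
    (h : AffineIndependent ℝ ![x, y, z]) :
    (⟪x - y, x - z⟫ / (‖x - y‖ ^ 2 * ‖x - z‖ ^ 2)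
      + ⟪y - z, y - x⟫ / (‖y - z‖ ^ 2 * ‖y - x‖ ^ 2)
      + ⟪z - x, z - y⟫ / (‖z - x‖ ^ 2 * ‖z - y‖ ^ 2)
        = 2 * Real.sin (EuclideanGeometry.angle y x z) ^ 2 / ‖y - z‖ ^ 2)
    ∧ (⟪x - y, x - z⟫ / (‖x - y‖ ^ 2 * ‖x - z‖ ^ 2)
      + ⟪y - z, y - x⟫ / (‖y - z‖ ^ 2 * ‖y - x‖ ^ 2)
      + ⟪z - x, z - y⟫ / (‖z - x‖ ^ 2 * ‖z - y‖ ^ 2)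
        = (1 / 2) * ((Affine.Simplex.circumradius ⟨![x, y, z], h⟩)⁻¹) ^ 2)
    ∧ |⟪x - y, x - z⟫ / (‖x - y‖ ^ 2 * ‖x - z‖ ^ 2)
      + ⟪y - z, y - x⟫ / (‖y - z‖ ^ 2 * ‖y - x‖ ^ 2)
      + ⟪z - x, z - y⟫ / (‖z - x‖ ^ 2 * ‖z - y‖ ^ 2)|
        ≤ (9 / 2) / (‖x - y‖ ^ 2 + ‖y - z‖ ^ 2 + ‖z - x‖ ^ 2) := by
  have hxy : x ≠ y := by
    have := h.injective.ne (show (0 : Fin 3) ≠ 1 by decide); simpa using this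
  have hxz : x ≠ z := by
    have := h.injective.ne (show (0 : Fin 3) ≠ 2 by decide); simpa using this
  have hyz : y ≠ z := by
    have := h.injective.ne (show (1 : Fin 3) ≠ 2 by decide); simpa using this
  have ha0 : x - y ≠ 0 := sub_ne_zero.2 hxy
  have hb0 : x - z ≠ 0 := sub_ne_zero.2 hxz
  have hc0 : x - z - (x - y) ≠ 0 := by
    have : x - z - (x - y) = y - z := by abel
    rw [this]; exact sub_ne_zero.2 hyz
  have e1 : y - z = x - z - (x - y) := by abel
  have e2 : y - x = -(x - y) := by abel
  have e3 : z - x = -(x - z) := by abel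
  have e4 : z - y = x - y - (x - z) := by abel
  rw [e1, e2, e3, e4, cyclic_sum_aux (x - y) (x - z) ha0 hb0 hc0, norm_neg]
  -- abbreviations
  have hA0 : ‖x - y‖ ≠ 0 := norm_ne_zero_iff.2 ha0
  have hB0 : ‖x - z‖ ≠ 0 := norm_ne_zero_iff.2 hb0
  have hC0 : ‖x - z - (x - y)‖ ≠ 0 := norm_ne_zero_iff.2 hc0
  -- circumcenter set-up
  set T : Affine.Simplex ℝ E2 2 := ⟨![x, y, z], h⟩ with hT
  set O := T.circumcenter with hO
  set R := T.circumradius with hR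
  have hpt0 : T.points 0 = x := rfl
  have hpt1 : T.points 1 = y := rfl
  have hpt2 : T.points 2 = z := rfl
  have hdx : ‖x - O‖ = R := by
    have := T.dist_circumcenter_eq_circumradius 0
    rwa [hpt0, dist_eq_norm] at this
  have hdy : ‖y - O‖ = R := by
    have := T.dist_circumcenter_eq_circumradius 1
    rwa [hpt1, dist_eq_norm] at this
  have hdz : ‖z - O‖ = R := by
    have := T.dist_circumcenter_eq_circumradius 2
    rwa [hpt2, dist_eq_norm] at this
  set u := x - O with hu
  set v := y - O with hv
  set w := z - O with hw
  have hRpos : 0 < R := by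
    rcases lt_or_eq_of_le (hdx ▸ norm_nonneg u) with h' | h'
    · exact h'
    · exfalso
      apply hxy
      have hx0 : x = O := by
        have : ‖u‖ = 0 := by rw [hdx, ← h']
        have := norm_eq_zero.1 this
        rw [hu] at this; exact sub_eq_zero.1 this
      have hy0 : y = O := by
        have : ‖v‖ = 0 := by rw [hdy, ← h']
        have := norm_eq_zero.1 this
        rw [hv] at this; exact sub_eq_zero.1 this
      rw [hx0, hy0]
  have huu : ⟪u, u⟫ = R ^ 2 := by rw [real_inner_self_eq_norm_sq, hdx]
  have hvv : ⟪v, v⟫ = R ^ 2 := by rw [real_inner_self_eq_norm_sq, hdy]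
  have hww : ⟪w, w⟫ = R ^ 2 := by rw [real_inner_self_eq_norm_sq, hdz]
  have hab : x - y = u - v := by rw [hu, hv]; abel
  have hbb : x - z = u - w := by rw [hu, hw]; abel
  have hcb : x - z - (x - y) = v - w := by rw [hv, hw]; abel
  have hA2 : ‖x - y‖ ^ 2 = 2 * R ^ 2 - 2 * ⟪u, v⟫ := by
    rw [hab, ← real_inner_self_eq_norm_sq]
    simp only [inner_sub_left, inner_sub_right]
    rw [huu, hvv, real_inner_comm v u]; ring
  have hB2 : ‖x - z‖ ^ 2 = 2 * R ^ 2 - 2 * ⟪u, w⟫ := by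
    rw [hbb, ← real_inner_self_eq_norm_sq]
    simp only [inner_sub_left, inner_sub_right]
    rw [huu, hww, real_inner_comm w u]; ring
  have hC2 : ‖x - z - (x - y)‖ ^ 2 = 2 * R ^ 2 - 2 * ⟪v, w⟫ := by
    rw [hcb, ← real_inner_self_eq_norm_sq]
    simp only [inner_sub_left, inner_sub_right]
    rw [hvv, hww, real_inner_comm w v]; ring
  have hP2 : ⟪x - y, x - z⟫ = R ^ 2 - ⟪u, w⟫ - ⟪u, v⟫ + ⟪v, w⟫ := by
    rw [hab, hbb]
    simp only [inner_sub_left, inner_sub_right]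
    rw [huu, real_inner_comm v u, real_inner_comm w u, real_inner_comm w v]; ring
  have hG := gram_det_zero u v w
  rw [huu, hvv, hww] at hG
  have key : ‖x - y‖ ^ 2 * ‖x - z‖ ^ 2 * ‖x - z - (x - y)‖ ^ 2
      = 4 * R ^ 2 * (‖x - y‖ ^ 2 * ‖x - z‖ ^ 2 - ⟪x - y, x - z⟫ ^ 2) := by
    rw [hA2, hB2, hC2, hP2]
    linear_combination (-4 : ℝ) * hG
  have hKne : ‖x - y‖ ^ 2 * ‖x - z‖ ^ 2 - ⟪x - y, x - z⟫ ^ 2 ≠ 0 := by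
    intro hc
    rw [hc, mul_zero] at key
    exact (mul_ne_zero (mul_ne_zero (pow_ne_zero 2 hA0) (pow_ne_zero 2 hB0))
      (pow_ne_zero 2 hC0)) key
  have hval : 2 * (‖x - y‖ ^ 2 * ‖x - z‖ ^ 2 - ⟪x - y, x - z⟫ ^ 2)
      / (‖x - y‖ ^ 2 * ‖x - z‖ ^ 2 * ‖x - z - (x - y)‖ ^ 2) = 1 / (2 * R ^ 2) := by
    rw [key]
    rw [div_eq_div_iff (by positivity) (by positivity)]
    ring
  refine ⟨?_, ?_, ?_⟩
  · -- sine form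
    have hang : EuclideanGeometry.angle y x z = InnerProductGeometry.angle (x - y) (x - z) := by
      rw [EuclideanGeometry.angle, vsub_eq_sub, vsub_eq_sub, e2, e3,
        InnerProductGeometry.angle_neg_neg]
    rw [hang, Real.sin_sq, InnerProductGeometry.cos_angle]
    exact real_aux2 _ _ _ _ hA0 hB0 (pow_ne_zero 2 hC0)
  · rw [hval, hR]
    field_simp
  · rw [hval]
    have hquad : (0 : ℝ) ≤ 3 * R ^ 2 + 2 * (⟪u, v⟫ + ⟪u, w⟫ + ⟪v, w⟫) := by
      have hn : (0 : ℝ) ≤ ‖u + v + w‖ ^ 2 := sq_nonneg _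
      have hexp : ‖u + v + w‖ ^ 2 = 3 * R ^ 2 + 2 * (⟪u, v⟫ + ⟪u, w⟫ + ⟪v, w⟫) := by
        rw [← real_inner_self_eq_norm_sq]
        simp only [inner_add_left, inner_add_right]
        rw [huu, hvv, hww, real_inner_comm v u, real_inner_comm w u, real_inner_comm w v]
        ring
      linarith [hexp ▸ hn]
    have hsum : ‖x - y‖ ^ 2 + ‖x - z - (x - y)‖ ^ 2 + ‖x - z‖ ^ 2 ≤ 9 * R ^ 2 := by
      rw [hA2, hB2, hC2]; linarith
    have hsumpos : 0 < ‖x - y‖ ^ 2 + ‖x - z - (x - y)‖ ^ 2 + ‖x - z‖ ^ 2 := by positivity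
    rw [abs_of_pos (by positivity), div_le_div_iff₀ (by positivity) hsumpos]
    linarith [hsum]
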